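/- The cubic Σ passes through the five points D₀, D₁, D_λ, D_t, D_∞, i.e. Σ vanishes at (1,0,0), (1,1,1), (1,λ,λ²), (1,t,t²) and (0,0,1); moreover Σ is tangent at D_t to the conic Π : b₁² − b₀b₂ = 0, i.e. the gradient ∇Σ(1, t, t²) is a nonzero scalar multiple of ∇(b₁² − b₀b₂)(1, t, t²) = (−t², 2t, −1). -/
import Mathlib


/-- The cubic `Σ ⊂ ℙ²(ℂ)`, ramification locus of `Φ̃`. -/
noncomputable def SigmaCubic (l t b₀ b₁ b₂ : ℂ) : ℂ :=
  -(l * t ^ 2) * b₀ ^ 2 * b₁ + l * t * b₀ ^ 2 * b₂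
    + (l * t ^ 2 + l * t + t ^ 2) * b₀ * b₁ ^ 2 - (t ^ 2 + l) * b₁ ^ 3
    - 2 * (l * t + t) * b₀ * b₁ * b₂ + (l + t + 1) * b₁ ^ 2 * b₂
    + t * b₀ * b₂ ^ 2 - b₁ * b₂ ^ 2

lemma deriv_cubic_aux (a b c d p : ℂ) :
    deriv (fun x : ℂ => a * x ^ 3 + b * x ^ 2 + c * x + d) p
      = 3 * a * p ^ 2 + 2 * b * p + c := by
  have h3 : HasDerivAt (fun x : ℂ => x ^ 3) (3 * p ^ 2) p := by
    simpa using hasDerivAt_pow 3 p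
  have h2 : HasDerivAt (fun x : ℂ => x ^ 2) (2 * p) p := by
    simpa using hasDerivAt_pow 2 p
  have h1 : HasDerivAt (fun x : ℂ => x) 1 p := hasDerivAt_id p
  have h : HasDerivAt (fun x : ℂ => a * x ^ 3 + b * x ^ 2 + c * x + d)
      (a * (3 * p ^ 2) + b * (2 * p) + c * 1) p :=
    (((h3.const_mul a).add (h2.const_mul b)).add (h1.const_mul c)).add_const d
  have := h.deriv
  rw [this]; ring

/-- The cubic `Σ` passes through the five points `D₀, D₁, D_λ, D_t, D_∞`, i.e. it vanishes
at `(1,0,0)`, `(1,1,1)`, `(1,λ,λ²)`, `(1,t,t²)` and `(0,0,1)`; moreover `Σ` is tangent at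
`D_t` to the conic `Π : b₁² − b₀b₂ = 0`, i.e. the gradient `∇Σ(1, t, t²)` is a nonzero
scalar multiple of `∇(b₁² − b₀b₂)(1, t, t²) = (−t², 2t, −1)`. -/
theorem sigma_through_five_points (l t : ℂ) (hl0 : l ≠ 0) (hl1 : l ≠ 1)
    (ht0 : t ≠ 0) (ht1 : t ≠ 1) (htl : t ≠ l) :
    SigmaCubic l t 1 0 0 = 0 ∧
    SigmaCubic l t 1 1 1 = 0 ∧
    SigmaCubic l t 1 l (l ^ 2) = 0 ∧
    SigmaCubic l t 1 t (t ^ 2) = 0 ∧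
    SigmaCubic l t 0 0 1 = 0 ∧
    ∃ c : ℂ, c ≠ 0 ∧
      deriv (fun x => SigmaCubic l t x t (t ^ 2)) 1 = c * (-(t ^ 2)) ∧
      deriv (fun x => SigmaCubic l t 1 x (t ^ 2)) t = c * (2 * t) ∧
      deriv (fun x => SigmaCubic l t 1 t x) (t ^ 2) = c * (-1) := by
  refine ⟨by simp [SigmaCubic], by simp [SigmaCubic]; ring, by simp [SigmaCubic]; ring,
    by simp [SigmaCubic]; ring, by simp [SigmaCubic],
    -(t * (1 - t) * (l - t)), ?_, ?_, ?_, ?_⟩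
  · have h1 : (1 : ℂ) - t ≠ 0 := sub_ne_zero.mpr (fun h => ht1 h.symm)
    have h2 : l - t ≠ 0 := sub_ne_zero.mpr (fun h => htl h.symm)
    simp [ht0, h1, h2]
  · have hf : (fun x => SigmaCubic l t x t (t ^ 2))
        = fun x : ℂ => 0 * x ^ 3
          + (-(l * t ^ 2) * t + l * t * t ^ 2) * x ^ 2
          + ((l * t ^ 2 + l * t + t ^ 2) * t ^ 2 - 2 * (l * t + t) * t * t ^ 2
              + t * (t ^ 2) ^ 2) * x
          + (-(t ^ 2 + l) * t ^ 3 + (l + t + 1) * t ^ 2 * t ^ 2 - t * (t ^ 2) ^ 2) := by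
      funext x; simp only [SigmaCubic]; ring
    rw [hf, deriv_cubic_aux]; ring
  · have hf : (fun x => SigmaCubic l t 1 x (t ^ 2))
        = fun x : ℂ => (-(t ^ 2 + l)) * x ^ 3
          + ((l * t ^ 2 + l * t + t ^ 2) + (l + t + 1) * t ^ 2) * x ^ 2
          + (-(l * t ^ 2) - 2 * (l * t + t) * t ^ 2 - (t ^ 2) ^ 2) * x
          + (l * t * t ^ 2 + t * (t ^ 2) ^ 2) := by
      funext x; simp only [SigmaCubic]; ring
    rw [hf, deriv_cubic_aux]; ring
  · have hf : (fun x => SigmaCubic l t 1 t x)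
        = fun x : ℂ => 0 * x ^ 3 + (t - t) * x ^ 2
          + (l * t - 2 * (l * t + t) * t + (l + t + 1) * t ^ 2) * x
          + (-(l * t ^ 2) * t + (l * t ^ 2 + l * t + t ^ 2) * t ^ 2
              - (t ^ 2 + l) * t ^ 3) := by
      funext x; simp only [SigmaCubic]; ring
    rw [hf, deriv_cubic_aux]; ring
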